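/- Let z₊ > 0 > z₋ be real numbers with z₊ z₋ = −1 and z₊ ≠ 1. Then (2 z₊² − 1)/(z₊²)^{2/3} ≠ (2 z₋² − 1)/(z₋²)^{2/3}, where (·)^{2/3} denotes (real cube root of the square, i.e. (u)^{2/3} = (u²)^{1/3} applied to u = z±²). Equivalently, for positive reals u, v with u v = 1 and u ≠ 1, one has (2u² − 1)/u^{4/3} ≠ (2v² − 1)/v^{4/3}. -/

import Mathlib

/-- The real cube root. -/
noncomputable def cbrt (x : ℝ) : ℝ :=
  if 0 ≤ x then x ^ ((1 : ℝ) / 3) else -((-x) ^ ((1 : ℝ) / 3))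

lemma cbrt_pow6 (b : ℝ) (hb : 0 < b) : cbrt (b ^ 6) = b ^ 2 := by
  rw [cbrt, if_pos (by positivity), ← Real.rpow_natCast b 6,
    ← Real.rpow_mul hb.le]
  norm_num

/-- If `z₊ > 0 > z₋`, `z₊ z₋ = −1` and `z₊ ≠ 1`, then
`(2 z₊² − 1)/(z₊²)^{2/3} ≠ (2 z₋² − 1)/(z₋²)^{2/3}`, where
`(z²)^{2/3} = ((z²)²)^{1/3}` with the real cube root. -/
theorem F2_values_distinct_z (zp zm : ℝ)
    (hzp : 0 < zp) (hzm : zm < 0) (hmul : zp * zm = -1) (hzp1 : zp ≠ 1) :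
    (2 * zp ^ 2 - 1) / cbrt ((zp ^ 2) ^ 2) ≠ (2 * zm ^ 2 - 1) / cbrt ((zm ^ 2) ^ 2) := by
  have hzpne : zp ≠ 0 := ne_of_gt hzp
  set a : ℝ := zp ^ ((2:ℝ)/3) with ha
  have hapos : 0 < a := Real.rpow_pos_of_pos hzp _
  have ha3 : a ^ 3 = zp ^ 2 := by
    rw [ha, ← Real.rpow_natCast (zp ^ ((2:ℝ)/3)) 3, ← Real.rpow_mul hzp.le]
    norm_num
  have ha6 : (zp ^ 2) ^ 2 = a ^ 6 := by
    rw [← ha3]; ring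
  have hc1 : cbrt ((zp ^ 2) ^ 2) = a ^ 2 := by
    rw [ha6, cbrt_pow6 a hapos]
  have hzm2 : zm ^ 2 = (a ^ 3)⁻¹ := by
    have hm : zm = -1 / zp := by field_simp; linarith [hmul]
    rw [hm, ha3]; field_simp
  have hc2 : cbrt ((zm ^ 2) ^ 2) = (a ^ 2)⁻¹ := by
    have : (zm ^ 2) ^ 2 = (a⁻¹) ^ 6 := by rw [hzm2]; field_simp
    rw [this, cbrt_pow6 a⁻¹ (by positivity)]
    field_simp
  rw [hc1, hc2, ha3.symm, hzm2]
  intro h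
  have hane : a ≠ 1 := by
    intro h1
    apply hzp1
    have : zp ^ 2 = 1 := by rw [← ha3, h1]; ring
    nlinarith
  have hkey : (a - 1) * (a + 1) ^ 3 = 0 := by
    field_simp at h
    have ha3ne : a ^ 3 ≠ 0 := by positivity
    have h2 : a ^ 3 * ((a - 1) * (a + 1) ^ 3) = 0 := by linear_combination a ^ 3 * h
    exact (mul_eq_zero.1 h2).resolve_left ha3ne
  rcases mul_eq_zero.1 hkey with h1 | h2
  · exact hane (by linarith)
  · nlinarith [pow_pos (by linarith : (0:ℝ) < a + 1) 3]
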